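/- If H is an intra-regular LA-semihypergroup with pure left identity, then for any right hyperideal R and left hyperideal L of H, R ∩ L = R ∘ L. -/
import Mathlib


open Set

/-- Elementwise extension of a hyperoperation to subsets:
`hmul op A B = ⋃_{a∈A, b∈B} op a b`. -/
def hmul {H : Type*} (op : H → H → Set H) (A B : Set H) : Set H :=
  ⋃ a ∈ A, ⋃ b ∈ B, op a b

section aux

variable {H : Type*} {op : H → H → Set H}

lemma mem_hmul {A B : Set H} {t : H} :
    t ∈ hmul op A B ↔ ∃ a ∈ A, ∃ b ∈ B, t ∈ op a b := by
  simp [hmul]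

lemma hmul_mono {A B C D : Set H} (h1 : A ⊆ C) (h2 : B ⊆ D) :
    hmul op A B ⊆ hmul op C D := by
  intro t ht
  rw [mem_hmul] at *
  obtain ⟨a, ha, b, hb, h⟩ := ht
  exact ⟨a, h1 ha, b, h2 hb, h⟩

lemma hmul_singleton {a b : H} : hmul op {a} {b} = op a b := by
  simp [hmul]

lemma inv_law (hLA : ∀ x y z : H, hmul op (op x y) {z} = hmul op (op z y) {x})
    (A B C : Set H) :
    hmul op (hmul op A B) C = hmul op (hmul op C B) A := by
  have key : ∀ a b c t : H,
      (∃ u ∈ op a b, t ∈ op u c) ↔ ∃ u ∈ op c b, t ∈ op u a := by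
    intro a b c t
    have h1 : t ∈ hmul op (op a b) {c} ↔ t ∈ hmul op (op c b) {a} := by
      rw [hLA a b c]
    simpa [mem_hmul] using h1
  ext t
  simp only [mem_hmul]
  constructor
  · rintro ⟨u, ⟨a, ha, b, hb, hu⟩, c, hc, ht⟩
    obtain ⟨v, hv, htv⟩ := (key a b c t).mp ⟨u, hu, ht⟩
    exact ⟨v, ⟨c, hc, b, hb, hv⟩, a, ha, htv⟩
  · rintro ⟨u, ⟨c, hc, b, hb, hu⟩, a, ha, ht⟩
    obtain ⟨v, hv, htv⟩ := (key a b c t).mpr ⟨u, hu, ht⟩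
    exact ⟨v, ⟨a, ha, b, hb, hv⟩, c, hc, htv⟩

lemma medial (hLA : ∀ x y z : H, hmul op (op x y) {z} = hmul op (op z y) {x})
    (A B C D : Set H) :
    hmul op (hmul op A B) (hmul op C D)
      = hmul op (hmul op A C) (hmul op B D) := by
  rw [inv_law hLA A B, inv_law hLA C D B, inv_law hLA (hmul op B D) C A]

lemma ident {e : H} (he : ∀ a : H, op e a = {a}) (A : Set H) :
    hmul op {e} A = A := by
  ext t; simp [hmul, he]

lemma rule5 (hLA : ∀ x y z : H, hmul op (op x y) {z} = hmul op (op z y) {x})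
    {e : H} (he : ∀ a : H, op e a = {a}) (A B C : Set H) :
    hmul op A (hmul op B C) = hmul op B (hmul op A C) := by
  conv_lhs => rw [← ident he A]
  rw [medial hLA {e} A B C, ident he B]

lemma paramedial (hLA : ∀ x y z : H, hmul op (op x y) {z} = hmul op (op z y) {x})
    {e : H} (he : ∀ a : H, op e a = {a}) (A B C D : Set H) :
    hmul op (hmul op A B) (hmul op C D)
      = hmul op (hmul op D C) (hmul op B A) := by
  rw [medial hLA A B C D]
  have h1 : hmul op A C = hmul op (hmul op C A) {e} := by
    conv_lhs => rw [← ident he A]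
    exact inv_law hLA {e} A C
  rw [h1, medial hLA (hmul op C A) {e} B D, ident he D,
      inv_law hLA (hmul op C A) B D, medial hLA D B C A]

end aux

theorem stmt13 {H : Type*} (op : H → H → Set H)
    (hne : ∀ a b : H, (op a b).Nonempty)
    (hLA : ∀ x y z : H, hmul op (op x y) {z} = hmul op (op z y) {x})
    (e : H) (he : ∀ a : H, op e a = {a})
    (hir : ∀ a : H, ∃ x y : H, a ∈ hmul op (hmul op {x} (op a a)) {y})
    (R L : Set H) (hRne : R.Nonempty) (hLne : L.Nonempty)
    (hR : hmul op R Set.univ ⊆ R) (hL : hmul op Set.univ L ⊆ L) :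
    R ∩ L = hmul op R L := by
  apply Set.Subset.antisymm
  · rintro a ⟨haR, haL⟩
    obtain ⟨x, y, hxy⟩ := hir a
    set S : Set H := {a} with hS
    set X : Set H := {x}
    set Y : Set H := {y}
    set E : Set H := {e}
    set W : Set H := hmul op (hmul op X E) Y with hW
    have key : hmul op (hmul op X (op a a)) Y
        = hmul op S (hmul op (hmul op W E) S) := by
      calc hmul op (hmul op X (op a a)) Y
          = hmul op (hmul op X (hmul op S S)) (hmul op E Y) := by
            rw [hmul_singleton, ident he Y]
        _ = hmul op (hmul op X E) (hmul op (hmul op S S) Y) :=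
            medial hLA X (hmul op S S) E Y
        _ = hmul op (hmul op S S) W := by
            rw [rule5 hLA he (hmul op X E) (hmul op S S) Y]
        _ = hmul op (hmul op S S) (hmul op E W) := by rw [ident he W]
        _ = hmul op (hmul op W E) (hmul op S S) := paramedial hLA he S S E W
        _ = hmul op S (hmul op (hmul op W E) S) := rule5 hLA he (hmul op W E) S S
    rw [key] at hxy
    have hsub : hmul op S (hmul op (hmul op W E) S) ⊆ hmul op R L := by
      apply hmul_mono
      · exact Set.singleton_subset_iff.mpr haR
      · intro t ht
        exact hL (hmul_mono (Set.subset_univ _)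
          (Set.singleton_subset_iff.mpr haL) ht)
    exact hsub hxy
  · intro t ht
    constructor
    · exact hR (hmul_mono (subset_refl R) (Set.subset_univ L) ht)
    · exact hL (hmul_mono (Set.subset_univ R) (subset_refl L) ht)
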